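/- The Cauchy–Binet theorem for the permanent: For all m×m complex matrices A and B and all p, q ∈ ℕ^m, Per((AB)_{p,q}) = Σ_{k ∈ ℕ^m, |k| = |p|} (1/k!) · Per(A_{p,k}) · Per(B_{k,q}). -/

import Mathlib

open BigOperators Matrix

/-- The list of row indices of `A_{p,·}`: each index `i` repeated `p i` times, in order. -/
def repList {m : ℕ} (p : Fin m → ℕ) : List (Fin m) :=
  (List.finRange m).flatMap fun i => List.replicate (p i) i

lemma repList_length {m : ℕ} (p : Fin m → ℕ) : (repList p).length = ∑ i, p i := by
  simp only [repList, List.length_flatMap, Fin.sum_univ_def]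
  congr 1
  apply List.map_congr_left
  intro i _
  simp

/-- The matrix `A_{p,q}`: row `i` repeated `p i` times, column `j` repeated `q j` times. -/
def repMat {m : ℕ} (A : Matrix (Fin m) (Fin m) ℂ) (p q : Fin m → ℕ) :
    Matrix (Fin (∑ i, p i)) (Fin (∑ j, q j)) ℂ :=
  Matrix.of fun r c =>
    A ((repList p).get (Fin.cast (repList_length p).symm r))
      ((repList q).get (Fin.cast (repList_length q).symm c))

/-- `Per(A_{p,q})`; by convention `0` when the matrix is not square. -/
noncomputable def perRep {m : ℕ} (A : Matrix (Fin m) (Fin m) ℂ) (p q : Fin m → ℕ) : ℂ :=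
  if h : (∑ i, p i) = (∑ j, q j) then
    (Matrix.of fun r c : Fin (∑ i, p i) => repMat A p q r (Fin.cast h c)).permanent
  else 0

/-! ### Auxiliary machinery -/

lemma perm_eq_sum' {n : Type*} [DecidableEq n] [Fintype n] (M : Matrix n n ℂ) :
    M.permanent = ∑ σ : Equiv.Perm n, ∏ i, M i (σ i) := by
  unfold Matrix.permanent
  rw [← Equiv.sum_comp (Equiv.inv (Equiv.Perm n))]
  refine Finset.sum_congr rfl fun σ _ => ?_
  simp only [Equiv.inv_apply]
  rw [← Equiv.prod_comp σ (fun i => M (σ⁻¹ i) i)]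
  simp

lemma permanent_submatrix' {α β : Type*} [DecidableEq α] [Fintype α] [DecidableEq β] [Fintype β]
    (e₁ e₂ : β ≃ α) (M : Matrix α α ℂ) :
    (M.submatrix e₁ e₂).permanent = M.permanent := by
  rw [perm_eq_sum', perm_eq_sum']
  refine Fintype.sum_bijective (fun σ : Equiv.Perm β => ((e₁.symm.trans σ).trans e₂ : Equiv.Perm α))
    (Function.bijective_iff_has_inverse.mpr
      ⟨fun τ => (e₁.trans τ).trans e₂.symm, fun σ => by ext x; simp, fun τ => by ext x; simp⟩)
    _ _ fun σ => ?_
  rw [← Equiv.prod_comp e₁ (fun i => M i (((e₁.symm.trans σ).trans e₂) i))]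
  simp [Matrix.submatrix]

lemma expand_permanent {N m : ℕ} (A' : Fin N → Fin m → ℂ) (B' : Fin m → Fin N → ℂ) :
    (Matrix.of fun r c => ∑ j, A' r j * B' j c).permanent
      = ∑ f : Fin N → Fin m, (∏ r, A' r (f r)) *
          (Matrix.of fun r c => B' (f r) c).permanent := by
  rw [perm_eq_sum']
  simp only [Matrix.of_apply]
  have step : ∀ σ : Equiv.Perm (Fin N),
      (∏ i, ∑ j, A' i j * B' j (σ i))
        = ∑ f : Fin N → Fin m, ∏ i, A' i (f i) * B' (f i) (σ i) := by
    intro σ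
    rw [Finset.prod_univ_sum (fun _ => (Finset.univ : Finset (Fin m)))
      (fun i j => A' i j * B' j (σ i))]
    rw [Fintype.piFinset_univ]
  simp only [step]
  rw [Finset.sum_comm]
  refine Finset.sum_congr rfl fun f _ => ?_
  rw [perm_eq_sum', Finset.mul_sum]
  refine Finset.sum_congr rfl fun σ _ => ?_
  rw [← Finset.prod_mul_distrib]
  simp

/-- count vector of a function -/
def cnt {n m : ℕ} (f : Fin n → Fin m) : Fin m → ℕ :=
  fun j => (Finset.univ.filter fun r => f r = j).card

lemma cnt_eq_card {n m : ℕ} (f : Fin n → Fin m) (j : Fin m) :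
    cnt f j = Fintype.card {r // f r = j} := (Fintype.card_subtype _).symm

lemma sum_cnt {n m : ℕ} (f : Fin n → Fin m) : ∑ j, cnt f j = n := by
  have := (Finset.card_eq_sum_card_fiberwise
    (s := (Finset.univ : Finset (Fin n))) (t := (Finset.univ : Finset (Fin m)))
    (f := f) (fun x _ => Finset.mem_univ (f x))).symm
  simpa [cnt] using this

lemma exists_perm_of_cnt_eq {n m : ℕ} {f g : Fin n → Fin m} (h : cnt f = cnt g) :
    ∃ σ : Equiv.Perm (Fin n), g ∘ σ = f := by
  have e : ∀ j, {r // f r = j} ≃ {r // g r = j} := fun j =>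
    Fintype.equivOfCardEq (by rw [← cnt_eq_card, ← cnt_eq_card, h])
  refine ⟨((Equiv.sigmaFiberEquiv f).symm.trans (Equiv.sigmaCongrRight e)).trans
    (Equiv.sigmaFiberEquiv g), funext fun r => ?_⟩
  have : (((Equiv.sigmaFiberEquiv f).symm.trans (Equiv.sigmaCongrRight e)).trans
      (Equiv.sigmaFiberEquiv g)) r = (e (f r) ⟨r, rfl⟩).1 := rfl
  rw [Function.comp_apply, this]
  exact (e (f r) ⟨r, rfl⟩).2

lemma cnt_comp_equiv {n n' m : ℕ} (f : Fin n → Fin m) (e : Fin n' ≃ Fin n) :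
    cnt (f ∘ e) = cnt f := by
  funext j
  rw [cnt_eq_card, cnt_eq_card]
  exact Fintype.card_congr (Equiv.subtypeEquiv e (fun r => Iff.rfl))

lemma card_fiber {n m : ℕ} {f g : Fin n → Fin m} (h : cnt f = cnt g) (σ₀ : Equiv.Perm (Fin n))
    (hσ₀ : g ∘ σ₀ = f) :
    (Finset.univ.filter fun σ : Equiv.Perm (Fin n) => g ∘ σ = f).card
      = ∏ j, Nat.factorial (cnt g j) := by
  rw [← Fintype.card_subtype]
  have key : ∀ σ : Equiv.Perm (Fin n), g ∘ σ = f ↔ f ∘ ⇑((Equiv.mulLeft σ₀⁻¹) σ) = f := by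
    intro σ
    have hfg : ∀ y, f (σ₀⁻¹ y) = g y := fun y => by
      have := congrFun hσ₀ (σ₀⁻¹ y); simpa using this.symm
    constructor
    · intro hs; funext x
      simp only [Equiv.coe_mulLeft, Function.comp_apply, Equiv.Perm.mul_apply]
      rw [hfg]; exact congrFun hs x
    · intro hs; funext x
      have := congrFun hs x
      simp only [Equiv.coe_mulLeft, Function.comp_apply, Equiv.Perm.mul_apply] at this
      rw [hfg] at this; exact this
  rw [Fintype.card_congr (Equiv.subtypeEquiv
    (q := fun τ : Equiv.Perm (Fin n) => f ∘ ⇑τ = f) (Equiv.mulLeft σ₀⁻¹) key)]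
  rw [DomMulAct.stabilizer_card f]
  refine Finset.prod_congr rfl fun j _ => ?_
  rw [← cnt_eq_card, h]

lemma countP_eq_sum_map {α : Type*} (l : List α) (p : α → Bool) :
    l.countP p = (l.map fun x => if p x then 1 else 0).sum := by
  induction l with
  | nil => simp
  | cons x xs ih => rw [List.countP_cons]; simp [ih]; split <;> simp [Nat.add_comm]

lemma count_get {α : Type*} [DecidableEq α] (l : List α) (a : α) :
    (Finset.univ.filter fun r : Fin l.length => l.get r = a).card = l.count a := by
  conv_rhs => rw [← List.map_get_finRange l]
  rw [List.count_eq_countP, List.countP_map, Finset.card_filter, Fin.sum_univ_def,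
    countP_eq_sum_map]
  simp

def repFun {m : ℕ} (k : Fin m → ℕ) : Fin (∑ i, k i) → Fin m :=
  fun r => (repList k).get (Fin.cast (repList_length k).symm r)

lemma count_repList {m : ℕ} (k : Fin m → ℕ) (j : Fin m) : (repList k).count j = k j := by
  unfold repList
  rw [List.count_flatMap]
  simp only [Function.comp_def, List.count_replicate]
  rw [← Fin.sum_univ_def]
  simp

lemma cnt_repFun {m : ℕ} (k : Fin m → ℕ) : cnt (repFun k) = k := by
  funext j
  have hrep : repFun k = (repList k).get ∘ ⇑(finCongr (repList_length k).symm) := rfl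
  rw [hrep, cnt_comp_equiv]
  show (Finset.univ.filter fun r => (repList k).get r = j).card = k j
  rw [count_get, count_repList]

/-- **The Cauchy–Binet theorem for the permanent.** -/
theorem cauchy_binet_permanent (m : ℕ) (A B : Matrix (Fin m) (Fin m) ℂ) (p q : Fin m → ℕ) :
    perRep (A * B) p q =
      ∑ k ∈ Finset.Nat.antidiagonalTuple m (∑ i, p i),
        (1 / (∏ i, (Nat.factorial (k i) : ℂ))) * perRep A p k * perRep B k q := by
  by_cases h : (∑ i, p i) = (∑ j, q j)
  case neg =>
    rw [perRep, dif_neg h]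
    refine (Finset.sum_eq_zero fun k hk => ?_).symm
    rw [Finset.Nat.mem_antidiagonalTuple] at hk
    have : perRep B k q = 0 := by
      rw [perRep, dif_neg]
      rw [hk]; exact h
    rw [this, mul_zero]
  case pos =>
  rw [perRep, dif_pos h]
  have hM : (Matrix.of fun r c : Fin (∑ i, p i) => repMat (A * B) p q r (Fin.cast h c))
      = Matrix.of fun r c : Fin (∑ i, p i) =>
          ∑ j, A (repFun p r) j * B j (repFun q (Fin.cast h c)) := by
    ext r c
    simp [repMat, repFun, Matrix.mul_apply]
  rw [hM, expand_permanent (fun r j => A (repFun p r) j)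
    (fun j c => B j (repFun q (Fin.cast h c)))]
  rw [← Finset.sum_fiberwise_of_maps_to (g := cnt)
    (t := Finset.Nat.antidiagonalTuple m (∑ i, p i))
    (fun f _ => Finset.Nat.mem_antidiagonalTuple.mpr (sum_cnt f))]
  refine Finset.sum_congr rfl fun k hk => ?_
  rw [Finset.Nat.mem_antidiagonalTuple] at hk
  -- hk : ∑ j, k j = ∑ i, p i
  set g : Fin (∑ i, p i) → Fin m := repFun k ∘ ⇑(finCongr hk.symm) with hg
  have hcntg : cnt g = k := by rw [hg, cnt_comp_equiv, cnt_repFun]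
  -- identify perRep B k q
  have hBk : perRep B k q
      = (Matrix.of fun r c : Fin (∑ i, p i) =>
          B (g r) (repFun q (Fin.cast h c))).permanent := by
    have h2 : (∑ j, k j) = (∑ j, q j) := hk.trans h
    rw [perRep, dif_pos h2]
    rw [← permanent_submatrix' (finCongr hk.symm) (finCongr hk.symm)]
    congr 1
  -- identify perRep A p k
  have hAk : perRep A p k
      = ∑ σ : Equiv.Perm (Fin (∑ i, p i)), ∏ r, A (repFun p r) ((g ∘ ⇑σ) r) := by
    have h3 : (∑ i, p i) = (∑ j, k j) := hk.symm
    rw [perRep, dif_pos h3]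
    have : (Matrix.of fun r c : Fin (∑ i, p i) => repMat A p k r (Fin.cast h3 c))
        = Matrix.of fun r c : Fin (∑ i, p i) => A (repFun p r) (g c) := by
      ext r c
      simp [repMat, repFun, hg]
    rw [this, perm_eq_sum']
    rfl
  -- F f = ∏ r, A (ρ r) (f r)
  have hAk2 : perRep A p k = (∏ j, Nat.factorial (k j) : ℕ) •
      ∑ f ∈ Finset.univ.filter (fun f : Fin (∑ i, p i) → Fin m => cnt f = k),
        ∏ r, A (repFun p r) (f r) := by
    rw [hAk]
    rw [Finset.sum_comp (fun f : Fin (∑ i, p i) → Fin m => ∏ r, A (repFun p r) (f r))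
      (fun σ : Equiv.Perm (Fin (∑ i, p i)) => g ∘ ⇑σ)]
    have himg : Finset.univ.image (fun σ : Equiv.Perm (Fin (∑ i, p i)) => g ∘ ⇑σ)
        = Finset.univ.filter (fun f : Fin (∑ i, p i) → Fin m => cnt f = k) := by
      ext f
      simp only [Finset.mem_image, Finset.mem_univ, true_and, Finset.mem_filter]
      constructor
      · rintro ⟨σ, rfl⟩
        rw [cnt_comp_equiv, hcntg]
      · intro hf
        obtain ⟨σ, hσ⟩ := exists_perm_of_cnt_eq (f := f) (g := g) (by rw [hf, hcntg])
        exact ⟨σ, hσ⟩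
    rw [himg, Finset.smul_sum]
    refine Finset.sum_congr rfl fun f hf => ?_
    rw [Finset.mem_filter] at hf
    have hcf : cnt f = cnt g := by rw [hf.2, hcntg]
    obtain ⟨σ₀, hσ₀⟩ := exists_perm_of_cnt_eq hcf
    rw [card_fiber hcf σ₀ hσ₀, hcntg]
  -- PB f = PB g for f in the fiber
  have hPB : ∀ f ∈ Finset.univ.filter (fun f : Fin (∑ i, p i) → Fin m => cnt f = k),
      (Matrix.of fun r c : Fin (∑ i, p i) => B (f r) (repFun q (Fin.cast h c))).permanent
        = (Matrix.of fun r c : Fin (∑ i, p i) =>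
            B (g r) (repFun q (Fin.cast h c))).permanent := by
    intro f hf
    rw [Finset.mem_filter] at hf
    obtain ⟨σ, hσ⟩ := exists_perm_of_cnt_eq (f := f) (g := g) (by rw [hf.2, hcntg])
    rw [← permanent_submatrix' σ (Equiv.refl _)
      (Matrix.of fun r c : Fin (∑ i, p i) => B (g r) (repFun q (Fin.cast h c)))]
    congr 1
    ext r c
    simp [Matrix.submatrix, ← hσ]
  -- put it together
  have hK : (∏ i, ((k i).factorial : ℂ)) ≠ 0 :=
    Finset.prod_ne_zero_iff.mpr fun i _ => by exact_mod_cast (Nat.factorial_ne_zero (k i))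
  rw [hAk2, hBk]
  rw [nsmul_eq_mul]
  push_cast
  have : ∀ f ∈ Finset.univ.filter (fun f : Fin (∑ i, p i) → Fin m => cnt f = k),
      (∏ r, A (repFun p r) (f r)) *
        (Matrix.of fun r c : Fin (∑ i, p i) => B (f r) (repFun q (Fin.cast h c))).permanent
      = (∏ r, A (repFun p r) (f r)) *
        (Matrix.of fun r c : Fin (∑ i, p i) =>
          B (g r) (repFun q (Fin.cast h c))).permanent := by
    intro f hf; rw [hPB f hf]
  rw [Finset.sum_congr rfl this, ← Finset.sum_mul]
  field_simp
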